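/- Let G be a bipartite graph with left vertex set U and right vertex set V in which every left vertex has degree d_U and every right vertex has degree d_V. Let λ be the ratio of the second largest to the largest eigenvalue of the adjacency matrix of G. For S ⊆ U with |S| = α|U| and T ⊆ V with |T| = β|V|, the number e(S,T) of edges between S and T satisfies | e(S,T)/e(G) − αβ | ≤ λ·sqrt(αβ(1−α)(1−β)). -/

import Mathlib

open Matrix Finset

set_option maxHeartbeats 1000000

/-- The bipartite expander mixing lemma for biregular bipartite graphs. -/
theorem stmt_9 (U V : Type) [Fintype U] [Fintype V] [DecidableEq U] [DecidableEq V]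
    [Nonempty U] [Nonempty V]
    (A : Matrix (U ⊕ V) (U ⊕ V) ℝ) (hA : A.IsHermitian)
    (h01 : ∀ i j, A i j = 0 ∨ A i j = 1)
    (hbipU : ∀ u u', A (Sum.inl u) (Sum.inl u') = 0)
    (hbipV : ∀ v v', A (Sum.inr v) (Sum.inr v') = 0)
    (dU dV : ℝ)
    (hdU : ∀ u, ∑ v, A (Sum.inl u) (Sum.inr v) = dU)
    (hdV : ∀ v, ∑ u, A (Sum.inl u) (Sum.inr v) = dV)
    (lam1 lam2 : ℝ) (hlam1 : 0 < lam1)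
    (hmax : ∀ i, hA.eigenvalues i ≤ lam1)
    (hsecond : ∃ i₀, hA.eigenvalues i₀ = lam1 ∧ ∀ i, i ≠ i₀ → hA.eigenvalues i ≤ lam2)
    (S : Finset U) (T : Finset V) (α β : ℝ)
    (hα : (S.card : ℝ) = α * Fintype.card U)
    (hβ : (T.card : ℝ) = β * Fintype.card V)
    (eG : ℝ) (heG : eG = dU * Fintype.card U) (heGpos : 0 < eG) :
    |(∑ u ∈ S, ∑ v ∈ T, A (Sum.inl u) (Sum.inr v)) / eG - α * β|
      ≤ (lam2 / lam1) * Real.sqrt (α * β * (1 - α) * (1 - β)) := by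
  classical
  obtain ⟨i₀, hi₀, hsec⟩ := hsecond
  set n : ℝ := (Fintype.card U : ℝ) with hn_def
  set m : ℝ := (Fintype.card V : ℝ) with hm_def
  have hn : 0 < n := by rw [hn_def]; exact_mod_cast Fintype.card_pos (α := U)
  have hm : 0 < m := by rw [hm_def]; exact_mod_cast Fintype.card_pos (α := V)
  have hdU0 : 0 < dU := by nlinarith [heGpos, hn]
  -- double counting
  have hsum : n * dU = m * dV := by
    have h1 : ∑ u : U, ∑ v : V, A (Sum.inl u) (Sum.inr v) = n * dU := by
      simp [hdU, hn_def, mul_comm]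
    have h2 : ∑ u : U, ∑ v : V, A (Sum.inl u) (Sum.inr v) = m * dV := by
      rw [Finset.sum_comm]; simp [hdV, hm_def, mul_comm]
    linarith
  have hdV0 : 0 < dV := by nlinarith
  have hApos : ∀ i j, 0 ≤ A i j := by
    intro i j; rcases h01 i j with h | h <;> simp [h]
  have h_sym : ∀ i j, A i j = A j i := by
    intro i j
    have := congrFun (congrFun hA j) i
    simpa [Matrix.conjTranspose_apply] using this
  -- full row sums
  have hrowU : ∀ u, ∑ j, A (Sum.inl u) j = dU := by
    intro u; rw [Fintype.sum_sum_type]; simp [hbipU, hdU]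
  have hrowV : ∀ v, ∑ j, A (Sum.inr v) j = dV := by
    intro v; rw [Fintype.sum_sum_type]
    simp only [hbipV, Finset.sum_const_zero, add_zero]
    rw [← hdV v]; exact Finset.sum_congr rfl fun u _ => h_sym _ _
  -- eigenbasis machinery
  set B := hA.eigenvectorBasis with hB
  set μ := hA.eigenvalues with hμ
  set bas : U ⊕ V → (U ⊕ V) → ℝ := fun i => ⇑(B i) with hbas
  have h_on : ∀ i, bas i ⬝ᵥ bas i = 1 := by
    intro i
    have h0 := B.orthonormal
    rw [orthonormal_iff_ite] at h0
    have h2 := h0 i i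
    rw [PiLp.inner_apply] at h2
    simpa [hbas, dotProduct, RCLike.inner_apply, mul_comm, Fintype.sum_sum_type, sq] using h2
  have h_expand : ∀ f : (U ⊕ V) → ℝ, f = ∑ i, (bas i ⬝ᵥ f) • bas i := by
    intro f
    funext k
    have h : (EuclideanSpace.projₗ (𝕜 := ℝ) k)
        (∑ i, (inner ℝ (B i) ((WithLp.equiv 2 _).symm f) : ℝ) • B i) = f k :=
      congrArg (EuclideanSpace.projₗ (𝕜 := ℝ) k) (B.sum_repr' ((WithLp.equiv 2 _).symm f))
    rw [map_sum] at h
    simp only [_root_.map_smul, smul_eq_mul, LinearMap.coe_comp, Function.comp_apply,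
      WithLp.linearEquiv_apply, LinearMap.proj_apply, WithLp.equiv_symm_apply, WithLp.ofLp_toLp,
      PiLp.inner_apply, RCLike.inner_apply, starRingEnd_apply, star_trivial] at h
    rw [show f k = ∑ x : U ⊕ V, (∑ x_1 : U ⊕ V, B x x_1 * f x_1) * (EuclideanSpace.projₗ (𝕜 := ℝ) k) (B x) from h.symm.trans (by simp only [mul_comm (f _)])]
    simp only [Pi.smul_apply, Finset.sum_apply, smul_eq_mul, dotProduct, hbas]
    rfl
  have h_eig : ∀ i, A *ᵥ bas i = μ i • bas i := fun i => hA.mulVec_eigenvectorBasis i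
  have h_sym_dot : ∀ f g : (U ⊕ V) → ℝ, f ⬝ᵥ (A *ᵥ g) = g ⬝ᵥ (A *ᵥ f) := by
    intro f g
    simp only [dotProduct, Matrix.mulVec, Finset.mul_sum]
    rw [Finset.sum_comm]
    refine Finset.sum_congr rfl fun i _ => Finset.sum_congr rfl fun j _ => ?_
    rw [h_sym i j]; ring
  have dot_sum_right : ∀ (f : (U ⊕ V) → ℝ) (F : (U ⊕ V) → (U ⊕ V) → ℝ),
      f ⬝ᵥ (∑ i, F i) = ∑ i, f ⬝ᵥ F i := by
    intro f F
    simp only [dotProduct, Finset.sum_apply, Finset.mul_sum]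
    exact Finset.sum_comm
  have sum_dot : ∀ (f : (U ⊕ V) → ℝ) (F : (U ⊕ V) → (U ⊕ V) → ℝ),
      (∑ i, F i) ⬝ᵥ f = ∑ i, F i ⬝ᵥ f := by
    intro f F
    rw [dotProduct_comm, dot_sum_right]
    exact Finset.sum_congr rfl fun i _ => dotProduct_comm _ _
  have mulVec_sum' : ∀ (F : (U ⊕ V) → (U ⊕ V) → ℝ),
      A *ᵥ (∑ i, F i) = ∑ i, A *ᵥ F i := by
    intro F
    funext k
    have h1 : (A *ᵥ ∑ i, F i) k = (fun j => A k j) ⬝ᵥ (∑ i, F i) := rfl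
    rw [h1, dot_sum_right]
    rw [Finset.sum_apply]
    rfl
  have h_spec : ∀ f g : (U ⊕ V) → ℝ,
      f ⬝ᵥ (A *ᵥ g) = ∑ i, μ i * (bas i ⬝ᵥ f) * (bas i ⬝ᵥ g) := by
    intro f g
    conv_lhs => rw [h_expand g]
    rw [mulVec_sum', Finset.sum_congr rfl fun i (_ : i ∈ Finset.univ) => Matrix.mulVec_smul A (bas i ⬝ᵥ g) (bas i),
      dot_sum_right]
    refine Finset.sum_congr rfl fun i _ => ?_
    rw [h_eig i, dotProduct_smul, dotProduct_smul,
      dotProduct_comm f (bas i)]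
    simp [smul_eq_mul]; ring
  have h_parseval : ∀ f : (U ⊕ V) → ℝ, f ⬝ᵥ f = ∑ i, (bas i ⬝ᵥ f) ^ 2 := by
    intro f
    nth_rewrite 1 [h_expand f]
    rw [sum_dot]
    refine Finset.sum_congr rfl fun i _ => ?_
    rw [smul_dotProduct, smul_eq_mul, sq]
  -- eigenvalue bound via row sums of A²
  have h_A2 : ∀ i, μ i ^ 2 ≤ dU * dV := by
    intro i
    obtain ⟨k, -, hk⟩ := Finset.exists_max_image Finset.univ (fun k => |bas i k|)
      ⟨Sum.inl (Classical.arbitrary U), Finset.mem_univ _⟩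
    have hk' : ∀ j, |bas i j| ≤ |bas i k| := fun j => hk j (Finset.mem_univ j)
    have hkpos : 0 < |bas i k| := by
      rcases lt_or_ge 0 (|bas i k|) with h | h
      · exact h
      · exfalso
        have hz : ∀ j, bas i j = 0 := by
          intro j
          have := hk' j
          have := abs_nonneg (bas i j)
          have : |bas i j| = 0 := le_antisymm (by linarith) (abs_nonneg _)
          exact abs_eq_zero.mp this
        have := h_on i
        simp [dotProduct, hz] at this
    have hAA : A *ᵥ (A *ᵥ bas i) = (μ i ^ 2) • bas i := by
      rw [h_eig i, Matrix.mulVec_smul, h_eig i, smul_smul, sq]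
    have hrow : ∀ l, ∑ j, A l j = (Sum.elim (fun _ => dU) (fun _ => dV) l) := by
      intro l; cases l with
      | inl u => exact hrowU u
      | inr v => exact hrowV v
    have hAyabs : ∀ l, |(A *ᵥ bas i) l| ≤ (∑ j, A l j) * |bas i k| := by
      intro l
      calc |(A *ᵥ bas i) l| = |∑ j, A l j * bas i j| := rfl
        _ ≤ ∑ j, |A l j * bas i j| := Finset.abs_sum_le_sum_abs _ _
        _ ≤ ∑ j, A l j * |bas i k| := by
            refine Finset.sum_le_sum fun j _ => ?_
            rw [abs_mul, abs_of_nonneg (hApos l j)]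
            exact mul_le_mul_of_nonneg_left (hk' j) (hApos l j)
        _ = (∑ j, A l j) * |bas i k| := by rw [← Finset.sum_mul]
    have hfinal : |μ i ^ 2 * bas i k| ≤ dU * dV * |bas i k| := by
      have h1 : μ i ^ 2 * bas i k = (A *ᵥ (A *ᵥ bas i)) k := by rw [hAA]; simp
      rw [h1]
      calc |(A *ᵥ (A *ᵥ bas i)) k| = |∑ l, A k l * (A *ᵥ bas i) l| := rfl
        _ ≤ ∑ l, |A k l * (A *ᵥ bas i) l| := Finset.abs_sum_le_sum_abs _ _
        _ ≤ ∑ l, A k l * ((∑ j, A l j) * |bas i k|) := by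
            refine Finset.sum_le_sum fun l _ => ?_
            rw [abs_mul, abs_of_nonneg (hApos k l)]
            exact mul_le_mul_of_nonneg_left (hAyabs l) (hApos k l)
        _ = (∑ l, A k l * (∑ j, A l j)) * |bas i k| := by
            rw [Finset.sum_mul]; exact Finset.sum_congr rfl fun l _ => by ring
        _ = dU * dV * |bas i k| := by
            congr 1
            have : ∑ l, A k l * (∑ j, A l j) = dU * dV := by
              simp only [hrow]
              cases k with
              | inl u =>
                  rw [Fintype.sum_sum_type]
                  simp only [Sum.elim_inl, Sum.elim_inr, hbipU, zero_mul,
                    Finset.sum_const_zero, zero_add]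
                  rw [← Finset.sum_mul, hdU]
              | inr v =>
                  rw [Fintype.sum_sum_type]
                  simp only [Sum.elim_inl, Sum.elim_inr, hbipV, zero_mul,
                    Finset.sum_const_zero, add_zero]
                  rw [← Finset.sum_mul, show (∑ u, A (Sum.inr v) (Sum.inl u)) = dV from by
                    rw [← hdV v]; exact Finset.sum_congr rfl fun u _ => h_sym _ _]
                  ring
            rw [this]
    rw [abs_mul] at hfinal
    have := (mul_le_mul_iff_of_pos_right hkpos).mp hfinal
    calc μ i ^ 2 ≤ |μ i ^ 2| := le_abs_self _
      _ ≤ dU * dV := this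
  -- the Perron vector
  set w : U ⊕ V → ℝ := Sum.elim (fun _ => Real.sqrt dU) (fun _ => Real.sqrt dV) with hw_def
  set μ0 : ℝ := Real.sqrt (dU * dV) with hμ0_def
  have hμ0pos : 0 < μ0 := Real.sqrt_pos.mpr (by positivity)
  have h_w : A *ᵥ w = μ0 • w := by
    funext k
    cases k with
    | inl u =>
        have : (A *ᵥ w) (Sum.inl u) = dU * Real.sqrt dV := by
          show ∑ j, A (Sum.inl u) j * w j = _
          rw [Fintype.sum_sum_type]
          simp only [hw_def, Sum.elim_inl, Sum.elim_inr, hbipU, zero_mul,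
            Finset.sum_const_zero, zero_add]
          rw [← Finset.sum_mul, hdU]
        rw [this]
        show dU * Real.sqrt dV = μ0 * w (Sum.inl u)
        simp only [hw_def, Sum.elim_inl, hμ0_def]
        rw [Real.sqrt_mul hdU0.le]
        rw [show Real.sqrt dU * Real.sqrt dV * Real.sqrt dU
            = (Real.sqrt dU * Real.sqrt dU) * Real.sqrt dV from by ring,
          Real.mul_self_sqrt hdU0.le]
    | inr v =>
        have : (A *ᵥ w) (Sum.inr v) = dV * Real.sqrt dU := by
          show ∑ j, A (Sum.inr v) j * w j = _
          rw [Fintype.sum_sum_type]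
          simp only [hw_def, Sum.elim_inl, Sum.elim_inr, hbipV, zero_mul,
            Finset.sum_const_zero, add_zero]
          rw [← Finset.sum_mul]
          have : ∑ u, A (Sum.inr v) (Sum.inl u) = dV := by
            rw [← hdV v]; exact Finset.sum_congr rfl fun u _ => h_sym _ _
          rw [this]
        rw [this]
        show dV * Real.sqrt dU = μ0 * w (Sum.inr v)
        simp only [hw_def, Sum.elim_inr, hμ0_def]
        rw [Real.sqrt_mul hdU0.le]
        rw [show Real.sqrt dU * Real.sqrt dV * Real.sqrt dV
            = Real.sqrt dU * (Real.sqrt dV * Real.sqrt dV) from by ring,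
          Real.mul_self_sqrt hdV0.le]
        ring
  -- coefficient lemma for eigen-equations
  have h_coeff : ∀ (ν : ℝ) (g : (U ⊕ V) → ℝ), A *ᵥ g = ν • g →
      ∀ j, (μ j - ν) * (bas j ⬝ᵥ g) = 0 := by
    intro ν g hg j
    have e1 : bas j ⬝ᵥ (A *ᵥ g) = ν * (bas j ⬝ᵥ g) := by
      rw [hg, dotProduct_smul]; simp
    have e2 : bas j ⬝ᵥ (A *ᵥ g) = μ j * (bas j ⬝ᵥ g) := by
      rw [h_sym_dot, h_eig j, dotProduct_smul, dotProduct_comm]; simp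
    rw [sub_mul]; rw [e1] at e2; linarith
  -- lam1 = μ0
  have hμ0_le : μ0 ≤ lam1 := by
    by_contra hcon
    push_neg at hcon
    have hall : ∀ j, bas j ⬝ᵥ w = 0 := by
      intro j
      have := h_coeff μ0 w h_w j
      rcases mul_eq_zero.mp this with h | h
      · exfalso; have := hmax j; nlinarith [sub_eq_zero.mp h]
      · exact h
    have : w = 0 := by rw [h_expand w]; simp [hall]
    have := congrFun this (Sum.inl (Classical.arbitrary U))
    simp only [hw_def, Sum.elim_inl, Pi.zero_apply] at this
    exact absurd this (by positivity)
  have hlam1_le : lam1 ≤ μ0 := by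
    have h2 := h_A2 i₀
    rw [hi₀] at h2
    have : lam1 = Real.sqrt (lam1 ^ 2) := (Real.sqrt_sq hlam1.le).symm
    rw [this, hμ0_def]
    exact Real.sqrt_le_sqrt h2
  have hμ0_eq : μ0 = lam1 := le_antisymm hμ0_le hlam1_le
  -- indicator vectors
  set xf : U ⊕ V → ℝ :=
    Sum.elim (fun u => (if u ∈ S then (1 : ℝ) else 0) - α) (fun _ => 0) with hxf_def
  set yf : U ⊕ V → ℝ :=
    Sum.elim (fun _ => (0 : ℝ)) (fun v => (if v ∈ T then (1 : ℝ) else 0) - β) with hyf_def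
  have hSsum : ∑ u : U, (if u ∈ S then (1 : ℝ) else 0) = α * n := by
    rw [Finset.sum_ite_mem, Finset.univ_inter, Finset.sum_const, nsmul_eq_mul, mul_one, hα]
  have hTsum : ∑ v : V, (if v ∈ T then (1 : ℝ) else 0) = β * m := by
    rw [Finset.sum_ite_mem, Finset.univ_inter, Finset.sum_const, nsmul_eq_mul, mul_one, hβ]
  have h_yw : yf ⬝ᵥ w = 0 := by
    show ∑ j, yf j * w j = 0
    rw [Fintype.sum_sum_type]
    simp only [hyf_def, hw_def, Sum.elim_inl, Sum.elim_inr, zero_mul, Finset.sum_const_zero,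
      zero_add]
    rw [← Finset.sum_mul]
    have : ∑ v : V, ((if v ∈ T then (1 : ℝ) else 0) - β) = 0 := by
      rw [Finset.sum_sub_distrib, hTsum, Finset.sum_const, nsmul_eq_mul,
        Finset.card_univ, ← hm_def]
      ring
    rw [this, zero_mul]
  have h_xnorm : xf ⬝ᵥ xf = α * (1 - α) * n := by
    show ∑ j, xf j * xf j = _
    rw [Fintype.sum_sum_type]
    simp only [hxf_def, Sum.elim_inl, Sum.elim_inr, mul_zero, Finset.sum_const_zero, add_zero]
    have : ∀ u : U, ((if u ∈ S then (1 : ℝ) else 0) - α) * ((if u ∈ S then (1 : ℝ) else 0) - α)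
        = (if u ∈ S then (1 : ℝ) else 0) * (1 - 2 * α) + α ^ 2 := by
      intro u; by_cases h : u ∈ S <;> simp [h] <;> ring
    rw [Finset.sum_congr rfl fun u _ => this u, Finset.sum_add_distrib, ← Finset.sum_mul,
      hSsum, Finset.sum_const, nsmul_eq_mul, Finset.card_univ, ← hn_def]
    ring
  have h_ynorm : yf ⬝ᵥ yf = β * (1 - β) * m := by
    show ∑ j, yf j * yf j = _
    rw [Fintype.sum_sum_type]
    simp only [hyf_def, Sum.elim_inl, Sum.elim_inr, mul_zero, Finset.sum_const_zero, zero_add,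
      zero_mul]
    have : ∀ v : V, ((if v ∈ T then (1 : ℝ) else 0) - β) * ((if v ∈ T then (1 : ℝ) else 0) - β)
        = (if v ∈ T then (1 : ℝ) else 0) * (1 - 2 * β) + β ^ 2 := by
      intro v; by_cases h : v ∈ T <;> simp [h] <;> ring
    rw [Finset.sum_congr rfl fun v _ => this v, Finset.sum_add_distrib, ← Finset.sum_mul,
      hTsum, Finset.sum_const, nsmul_eq_mul, Finset.card_univ, ← hm_def]
    ring
  -- the edge identity
  have h_edge : xf ⬝ᵥ (A *ᵥ yf)
      = (∑ u ∈ S, ∑ v ∈ T, A (Sum.inl u) (Sum.inr v)) - α * β * eG := by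
    have hAyf : ∀ u, (A *ᵥ yf) (Sum.inl u)
        = (∑ v ∈ T, A (Sum.inl u) (Sum.inr v)) - β * dU := by
      intro u
      show ∑ j, A (Sum.inl u) j * yf j = _
      rw [Fintype.sum_sum_type]
      simp only [hyf_def, Sum.elim_inl, Sum.elim_inr, mul_zero, Finset.sum_const_zero, zero_add]
      have : ∀ v : V, A (Sum.inl u) (Sum.inr v) * ((if v ∈ T then (1 : ℝ) else 0) - β)
          = (if v ∈ T then A (Sum.inl u) (Sum.inr v) else 0) - β * A (Sum.inl u) (Sum.inr v) := by
        intro v; by_cases h : v ∈ T <;> simp [h] <;> ring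
      rw [Finset.sum_congr rfl fun v _ => this v, Finset.sum_sub_distrib,
        Finset.sum_ite_mem, Finset.univ_inter, ← Finset.mul_sum, hdU]
    show ∑ j, xf j * (A *ᵥ yf) j = _
    rw [Fintype.sum_sum_type]
    simp only [hxf_def, Sum.elim_inl, Sum.elim_inr, zero_mul, Finset.sum_const_zero, add_zero]
    rw [Finset.sum_congr rfl fun u _ => by rw [hAyf u]]
    have expand : ∀ u : U, ((if u ∈ S then (1 : ℝ) else 0) - α)
          * ((∑ v ∈ T, A (Sum.inl u) (Sum.inr v)) - β * dU)
        = ((if u ∈ S then (∑ v ∈ T, A (Sum.inl u) (Sum.inr v)) else 0)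
            - (if u ∈ S then (1 : ℝ) else 0) * (β * dU))
          - α * (∑ v ∈ T, A (Sum.inl u) (Sum.inr v)) + α * β * dU := by
      intro u; by_cases h : u ∈ S <;> simp [h] <;> ring
    rw [Finset.sum_congr rfl fun u _ => expand u]
    rw [Finset.sum_add_distrib, Finset.sum_sub_distrib, Finset.sum_sub_distrib,
      Finset.sum_ite_mem, Finset.univ_inter, ← Finset.sum_mul, hSsum, ← Finset.mul_sum,
      Finset.sum_const, nsmul_eq_mul, Finset.card_univ, ← hn_def]
    have hTcol : ∑ u : U, ∑ v ∈ T, A (Sum.inl u) (Sum.inr v) = β * (m * dV) := by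
      rw [Finset.sum_comm]
      rw [Finset.sum_congr rfl fun v _ => hdV v]
      rw [Finset.sum_const, nsmul_eq_mul, hβ]; ring
    rw [hTcol, ← hsum, heG]
    ring
  -- orthogonality of yf to the top eigenvector (when lam2 < lam1)
  have h_perp : lam2 < lam1 → bas i₀ ⬝ᵥ yf = 0 := by
    intro hlt
    have hwspan : ∀ j, j ≠ i₀ → bas j ⬝ᵥ w = 0 := by
      intro j hj
      have := h_coeff μ0 w h_w j
      rcases mul_eq_zero.mp this with h | h
      · exfalso
        have h2 := hsec j hj
        have := sub_eq_zero.mp h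
        rw [hμ0_eq] at this
        exact absurd this (by linarith)
      · exact h
    have hw_collapse : w = (bas i₀ ⬝ᵥ w) • bas i₀ := by
      conv_lhs => rw [h_expand w]
      rw [Finset.sum_eq_single i₀]
      · intro j _ hj; rw [hwspan j hj, zero_smul]
      · intro h; exact absurd (Finset.mem_univ i₀) h
    have hc_ne : bas i₀ ⬝ᵥ w ≠ 0 := by
      intro hc
      have : w = 0 := by rw [hw_collapse, hc, zero_smul]
      have := congrFun this (Sum.inl (Classical.arbitrary U))
      simp only [hw_def, Sum.elim_inl, Pi.zero_apply] at this
      exact absurd this (by positivity)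
    have : yf ⬝ᵥ w = (bas i₀ ⬝ᵥ w) * (yf ⬝ᵥ bas i₀) := by
      conv_lhs => rw [hw_collapse]
      rw [dotProduct_smul]; simp
    rw [h_yw] at this
    rw [dotProduct_comm]
    rcases mul_eq_zero.mp this.symm with h | h
    · exact absurd h hc_ne
    · exact h
  -- key claim: contributing eigenvalues are at most lam2 in absolute value
  have h_key : ∀ i, bas i ⬝ᵥ yf ≠ 0 → |μ i| ≤ lam2 := by
    intro i hi
    rcases le_or_gt lam1 lam2 with hge | hlt
    · have := h_A2 i
      have : |μ i| ≤ μ0 := by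
        rw [← Real.sqrt_sq_eq_abs, hμ0_def]
        exact Real.sqrt_le_sqrt this
      linarith [hμ0_eq ▸ this]
    · rw [abs_le]
      constructor
      · -- lower bound: -lam2 ≤ μ i
        by_contra hcon
        push_neg at hcon
        set g : U ⊕ V → ℝ := Sum.elim (fun u => bas i (Sum.inl u)) (fun v => - bas i (Sum.inr v))
          with hg_def
        have hg_eig : A *ᵥ g = (- μ i) • g := by
          funext k
          cases k with
          | inl u =>
              have h1 : (A *ᵥ g) (Sum.inl u) = - ((A *ᵥ bas i) (Sum.inl u)) := by
                show ∑ j, A (Sum.inl u) j * g j = - ∑ j, A (Sum.inl u) j * bas i j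
                rw [Fintype.sum_sum_type, Fintype.sum_sum_type]
                simp only [hg_def, Sum.elim_inl, Sum.elim_inr, hbipU, zero_mul,
                  Finset.sum_const_zero, zero_add, mul_neg, Finset.sum_neg_distrib]
              rw [h1, h_eig i]
              show -(μ i * bas i (Sum.inl u)) = (-μ i) * g (Sum.inl u)
              simp [hg_def]
          | inr v =>
              have h1 : (A *ᵥ g) (Sum.inr v) = (A *ᵥ bas i) (Sum.inr v) := by
                show ∑ j, A (Sum.inr v) j * g j = ∑ j, A (Sum.inr v) j * bas i j
                rw [Fintype.sum_sum_type, Fintype.sum_sum_type]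
                simp only [hg_def, Sum.elim_inl, Sum.elim_inr, hbipV, zero_mul,
                  Finset.sum_const_zero, add_zero, mul_neg, neg_zero]
              rw [h1, h_eig i]
              show μ i * bas i (Sum.inr v) = (-μ i) * g (Sum.inr v)
              simp [hg_def]
        have hgspan : ∀ j, j ≠ i₀ → bas j ⬝ᵥ g = 0 := by
          intro j hj
          have := h_coeff (-μ i) g hg_eig j
          rcases mul_eq_zero.mp this with h | h
          · exfalso
            have h2 := hsec j hj
            have h3 := sub_eq_zero.mp h
            rw [h3] at h2
            linarith
          · exact h
        have hg_collapse : g = (bas i₀ ⬝ᵥ g) • bas i₀ := by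
          conv_lhs => rw [h_expand g]
          rw [Finset.sum_eq_single i₀]
          · intro j _ hj; rw [hgspan j hj, zero_smul]
          · intro h; exact absurd (Finset.mem_univ i₀) h
        have hyg : yf ⬝ᵥ g = - (yf ⬝ᵥ bas i) := by
          show ∑ j, yf j * g j = - ∑ j, yf j * bas i j
          rw [Fintype.sum_sum_type, Fintype.sum_sum_type]
          simp only [hyf_def, hg_def, Sum.elim_inl, Sum.elim_inr, zero_mul,
            Finset.sum_const_zero, zero_add, mul_neg, Finset.sum_neg_distrib]
        have hyg0 : yf ⬝ᵥ g = 0 := by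
          conv_lhs => rw [hg_collapse]
          rw [dotProduct_smul]
          have := h_perp hlt
          rw [dotProduct_comm] at this
          simp [this]
        rw [hyg0] at hyg
        rw [dotProduct_comm] at hi
        exact hi (by linarith [hyg])
      · -- upper bound: μ i ≤ lam2
        rcases eq_or_ne i i₀ with rfl | hne
        · exact absurd (h_perp hlt) hi
        · exact hsec i hne
  -- final assembly
  set E : ℝ := ∑ u ∈ S, ∑ v ∈ T, A (Sum.inl u) (Sum.inr v) with hE_def
  set c : U ⊕ V → ℝ := fun i => bas i ⬝ᵥ xf with hc_def
  set d : U ⊕ V → ℝ := fun i => bas i ⬝ᵥ yf with hd_def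
  have hmain : E / eG - α * β = (∑ i, μ i * c i * d i) / eG := by
    rw [← h_spec xf yf, h_edge]
    field_simp
  have hsum_c : ∑ i, c i ^ 2 = α * (1 - α) * n := by
    rw [← h_xnorm, h_parseval xf]
  have hsum_d : ∑ i, d i ^ 2 = β * (1 - β) * m := by
    rw [← h_ynorm, h_parseval yf]
  have hα1 : 0 ≤ α * (1 - α) := by
    have h0 : 0 ≤ ∑ i, c i ^ 2 := Finset.sum_nonneg fun i _ => sq_nonneg _
    rw [hsum_c] at h0
    nlinarith
  have hβ1 : 0 ≤ β * (1 - β) := by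
    have h0 : 0 ≤ ∑ i, d i ^ 2 := Finset.sum_nonneg fun i _ => sq_nonneg _
    rw [hsum_d] at h0
    nlinarith
  have hprod : α * β * (1 - α) * (1 - β) = (α * (1 - α)) * (β * (1 - β)) := by ring
  rw [hmain, abs_div, abs_of_pos heGpos, div_le_iff₀ heGpos]
  rcases lt_or_ge lam2 0 with hneg | hpos
  · -- degenerate case: lam2 < 0 forces yf = 0
    have hd0 : ∀ i, d i = 0 := by
      intro i
      by_contra h
      have := h_key i h
      linarith [abs_nonneg (μ i)]
    have h1 : (∑ i, μ i * c i * d i) = 0 := by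
      refine Finset.sum_eq_zero fun i _ => ?_
      rw [hd0 i, mul_zero]
    have h2 : β * (1 - β) = 0 := by
      have : ∑ i, d i ^ 2 = 0 := Finset.sum_eq_zero fun i _ => by rw [hd0 i]; ring
      rw [hsum_d] at this
      nlinarith
    rw [h1, abs_zero]
    have : α * β * (1 - α) * (1 - β) = 0 := by rw [hprod, h2, mul_zero]
    rw [this, Real.sqrt_zero, mul_zero, zero_mul]
  · -- main case
    have step1 : |∑ i, μ i * c i * d i|
        ≤ lam2 * (Real.sqrt (∑ i, c i ^ 2) * Real.sqrt (∑ i, d i ^ 2)) := by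
      calc |∑ i, μ i * c i * d i| ≤ ∑ i, |μ i * c i * d i| := Finset.abs_sum_le_sum_abs _ _
        _ ≤ ∑ i, lam2 * (|c i| * |d i|) := by
            refine Finset.sum_le_sum fun i _ => ?_
            rcases eq_or_ne (d i) 0 with h | h
            · simp [h]
            · rw [abs_mul, abs_mul]
              have := h_key i h
              have h1 : 0 ≤ |c i| * |d i| := by positivity
              calc |μ i| * |c i| * |d i| ≤ lam2 * |c i| * |d i| := by
                    apply mul_le_mul_of_nonneg_right _ (abs_nonneg _)
                    exact mul_le_mul_of_nonneg_right this (abs_nonneg _)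
                _ = lam2 * (|c i| * |d i|) := by ring
        _ = lam2 * ∑ i, |c i| * |d i| := by rw [Finset.mul_sum]
        _ ≤ lam2 * (Real.sqrt (∑ i, c i ^ 2) * Real.sqrt (∑ i, d i ^ 2)) := by
            apply mul_le_mul_of_nonneg_left _ hpos
            have := Real.sum_mul_le_sqrt_mul_sqrt Finset.univ (fun i => |c i|) (fun i => |d i|)
            simpa [sq_abs] using this
    have hnm : Real.sqrt (∑ i, c i ^ 2) * Real.sqrt (∑ i, d i ^ 2)
        = Real.sqrt (α * β * (1 - α) * (1 - β)) * Real.sqrt (n * m) := by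
      rw [hsum_c, hsum_d, ← Real.sqrt_mul (by positivity), hprod,
        ← Real.sqrt_mul (by nlinarith)]
      congr 1
      ring
    have heG_eq : eG = μ0 * Real.sqrt (n * m) := by
      have h1 : eG ^ 2 = (dU * dV) * (n * m) := by
        have : eG = m * dV := by rw [heG]; linarith [hsum]
        nlinarith [heG, hsum]
      have h2 : eG = Real.sqrt (eG ^ 2) := (Real.sqrt_sq heGpos.le).symm
      rw [h2, h1, hμ0_def, ← Real.sqrt_mul (by positivity)]
    calc |∑ i, μ i * c i * d i|
        ≤ lam2 * (Real.sqrt (∑ i, c i ^ 2) * Real.sqrt (∑ i, d i ^ 2)) := step1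
      _ = lam2 / lam1 * Real.sqrt (α * β * (1 - α) * (1 - β)) * eG := by
          rw [hnm, heG_eq, hμ0_eq]
          field_simp
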